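/- Griesmer bound for convolutional codes: Let F_q be a finite field with q elements, let G ∈ F_q[z]^{k×n} (1 ≤ k < n) be right invertible and minimal with row degrees ν_1,…,ν_k, complexity δ = ν_1 + … + ν_k, and memory m = max{ν_1,…,ν_k}, and let d = min{ wt(uG) : u ∈ F_q[z]^k, u ≠ 0 } be the free distance of the convolutional code generated by G. Then for every integer i with i ≥ 1 if km = δ, respectively i ≥ 0 if km > δ, one has ∑_{l=0}^{k(m+i)-δ-1} ⌈d/q^l⌉ ≤ n(m+i). -/
import Mathlib

open Polynomial Matrix

/-- The weight of a vector of polynomials: the total number of nonzero coefficients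
occurring in its polynomial entries. -/
def polyWt {F : Type*} [Field F] {n : ℕ} (v : Fin n → Polynomial F) : ℕ :=
  ∑ j, (v j).support.card

/-- The complexity of a polynomial generator matrix `G ∈ F[z]^{k×n}`:
the maximal degree of its `k×k` minors. -/
noncomputable def complexity {F : Type*} [Field F] {k n : ℕ}
    (G : Matrix (Fin k) (Fin n) (Polynomial F)) : ℕ :=
  Finset.univ.sup fun f : Fin k ↪ Fin n => ((G.submatrix id ⇑f).det).natDegree

/-- The `r`-th row degree of a polynomial matrix: the maximal degree of the
polynomial entries in row `r`. -/
noncomputable def rowDeg {F : Type*} [Field F] {k n : ℕ}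
    (G : Matrix (Fin k) (Fin n) (Polynomial F)) (r : Fin k) : ℕ :=
  Finset.univ.sup fun j => (G r j).natDegree

/-! ### Ceiling division on naturals -/

private def cd (a b : ℕ) : ℕ := (a + b - 1) / b

private lemma cd_le_iff {b : ℕ} (hb : 0 < b) (a c : ℕ) : cd a b ≤ c ↔ a ≤ c * b := by
  unfold cd
  rw [Nat.div_le_iff_le_mul_add_pred hb, mul_comm c b]
  omega

private lemma le_cd_mul {b : ℕ} (hb : 0 < b) (a : ℕ) : a ≤ cd a b * b :=
  (cd_le_iff hb a _).1 le_rfl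

private lemma cd_mono {b : ℕ} (hb : 0 < b) {a a' : ℕ} (h : a ≤ a') : cd a b ≤ cd a' b := by
  rw [cd_le_iff hb]
  exact h.trans (le_cd_mul hb a')

private lemma cd_one (a : ℕ) : cd a 1 = a := by simp [cd]

private lemma cd_cd {b c : ℕ} (hb : 0 < b) (hc : 0 < c) (a : ℕ) :
    cd (cd a b) c = cd a (b * c) := by
  apply le_antisymm
  · rw [cd_le_iff hc, cd_le_iff hb, mul_assoc, mul_comm c b]
    exact le_cd_mul (Nat.mul_pos hb hc) a
  · rw [cd_le_iff (Nat.mul_pos hb hc), ← mul_assoc, mul_comm _ b, mul_assoc, mul_comm b]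
    exact (le_cd_mul hb a).trans (Nat.mul_le_mul_right b (le_cd_mul hc _))

private lemma cd_pos {a b : ℕ} (hb : 0 < b) (ha : 0 < a) : 0 < cd a b := by
  by_contra h
  push_neg at h
  interval_cases h' : cd a b
  have := (cd_le_iff hb a 0).1 (le_of_eq h')
  omega

private lemma ceil_eq_cd {b : ℕ} (hb : 0 < b) (a : ℕ) :
    ⌈(a : ℚ) / (b : ℚ)⌉ = (cd a b : ℤ) := by
  have hbq : (0:ℚ) < (b:ℚ) := by exact_mod_cast hb
  rw [Int.ceil_eq_iff]
  constructor
  · rw [lt_div_iff₀ hbq]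
    have h2 : cd a b * b ≤ a + b - 1 := by
      unfold cd; exact Nat.div_mul_le_self _ _
    have h3 : cd a b * b + 1 ≤ a + b := by omega
    have : ((cd a b * b + 1 : ℕ) : ℚ) ≤ ((a + b : ℕ) : ℚ) := by exact_mod_cast h3
    push_cast at this ⊢
    nlinarith
  · rw [div_le_iff₀ hbq]
    exact_mod_cast le_cd_mul hb a

/-! ### Hamming weight on finite index types -/

open Classical in
private noncomputable def wtF {F : Type*} [Zero F] {ι : Type*} [Fintype ι] (x : ι → F) : ℕ :=
  (Finset.univ.filter fun j => x j ≠ 0).card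

private lemma wtF_le_card {F : Type*} [Zero F] {ι : Type*} [Fintype ι] (x : ι → F) :
    wtF x ≤ Fintype.card ι := by
  classical
  unfold wtF
  exact (Finset.card_filter_le _ _).trans (le_of_eq (Finset.card_univ))

private lemma wtF_pos {F : Type*} [Zero F] {ι : Type*} [Fintype ι] {x : ι → F} (hx : x ≠ 0) :
    0 < wtF x := by
  classical
  unfold wtF
  rw [Finset.card_pos]
  obtain ⟨j, hj⟩ := Function.ne_iff.1 hx
  exact ⟨j, Finset.mem_filter.2 ⟨Finset.mem_univ _, hj⟩⟩

/-! ### The residual code weight bound -/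

open Classical in
private lemma residual_wt {F : Type*} [Field F] [Fintype F] {ι : Type*} [Fintype ι]
    (C : Submodule F (ι → F)) (c x : ι → F) (hcC : c ∈ C) (hxC : x ∈ C)
    (d0 : ℕ) (hwc : wtF c = d0)
    (hmin : ∀ y ∈ C, y ≠ 0 → d0 ≤ wtF y)
    (hxc : ∀ α : F, x ≠ α • c) :
    cd d0 (Fintype.card F) ≤ wtF (fun j : {j // c j = 0} => x j.1) := by
  classical
  set q := Fintype.card F with hqdef
  have hq : 0 < q := Fintype.card_pos
  set S : Finset ι := Finset.univ.filter (fun j => c j ≠ 0) with hS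
  have hScard : S.card = d0 := by
    rw [← hwc]; unfold wtF; congr 1
  set A : F → Finset ι := fun α => S.filter (fun j => x j * (c j)⁻¹ = α) with hA
  have hfiber : S.card = ∑ α : F, (A α).card :=
    Finset.card_eq_sum_card_fiberwise (fun j _ => Finset.mem_univ _)
  obtain ⟨α, -, hmax⟩ := Finset.exists_max_image Finset.univ (fun α => (A α).card)
    Finset.univ_nonempty
  have hsum : d0 ≤ q * (A α).card := by
    calc d0 = ∑ β : F, (A β).card := by rw [← hScard, hfiber]
    _ ≤ ∑ _β : F, (A α).card := Finset.sum_le_sum (fun β _ => hmax β (Finset.mem_univ _))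
    _ = q * (A α).card := by rw [Finset.sum_const, Finset.card_univ, smul_eq_mul]
  have cdA : cd d0 q ≤ (A α).card := (cd_le_iff hq _ _).2 (by rwa [mul_comm])
  set y : ι → F := x - α • c with hy
  have hyC : y ∈ C := C.sub_mem hxC (C.smul_mem α hcC)
  have hy0 : y ≠ 0 := by
    intro h
    exact hxc α (by rwa [sub_eq_zero] at h)
  have hwy : d0 ≤ wtF y := hmin y hyC hy0
  set T : Finset ι := Finset.univ.filter (fun j => c j = 0 ∧ x j ≠ 0) with hT
  have hTw : wtF (fun j : {j // c j = 0} => x j.1) = T.card := by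
    unfold wtF
    apply Finset.card_bij (fun j _ => j.1)
    · intro j hj
      simp only [hT, Finset.mem_filter, Finset.mem_univ, true_and]
      exact ⟨j.2, by simpa using (Finset.mem_filter.1 hj).2⟩
    · intro j _ j' _ h
      exact Subtype.ext h
    · intro j hj
      simp only [hT, Finset.mem_filter, Finset.mem_univ, true_and] at hj
      exact ⟨⟨j, hj.1⟩, by simp [hj.2], rfl⟩
  have hsub : (Finset.univ.filter fun j => y j ≠ 0) ⊆ (S \ A α) ∪ T := by
    intro j hj
    have hyj : y j ≠ 0 := (Finset.mem_filter.1 hj).2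
    by_cases hcj : c j = 0
    · apply Finset.mem_union_right
      rw [hT, Finset.mem_filter]
      refine ⟨Finset.mem_univ _, hcj, ?_⟩
      intro hxj
      apply hyj
      simp [hy, hxj, hcj]
    · apply Finset.mem_union_left
      rw [Finset.mem_sdiff]
      refine ⟨Finset.mem_filter.2 ⟨Finset.mem_univ _, hcj⟩, ?_⟩
      intro hmem
      have := (Finset.mem_filter.1 hmem).2
      apply hyj
      have hxj : x j = α * c j := by
        rw [← this, inv_mul_cancel_right₀ hcj]
      simp [hy, hxj]
  have hAS : A α ⊆ S := Finset.filter_subset _ _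
  have hwyle : wtF y ≤ (d0 - (A α).card) + T.card := by
    have h1 : wtF y ≤ ((S \ A α) ∪ T).card := by
      unfold wtF; exact Finset.card_le_card hsub
    have h2 : ((S \ A α) ∪ T).card ≤ (S \ A α).card + T.card := Finset.card_union_le _ _
    rw [Finset.card_sdiff_of_subset hAS, hScard] at h2
    omega
  have hAd0 : (A α).card ≤ d0 := hScard ▸ Finset.card_le_card hAS
  omega

/-! ### The Griesmer bound for linear block codes -/

open Classical in
private theorem blockGriesmer {F : Type*} [Field F] [Fintype F] :
    ∀ (K : ℕ) (ι : Type) [Fintype ι] (C : Submodule F (ι → F)) (d : ℕ),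
      K ≤ Module.finrank F C →
      (∀ x ∈ C, x ≠ 0 → d ≤ wtF x) →
      ∑ l ∈ Finset.range K, cd d (Fintype.card F ^ l) ≤ Fintype.card ι := by
  intro K
  induction K with
  | zero => intro ι _ C d _ _; simp
  | succ K ih =>
    intro ι _ C d hrank hmin
    set q := Fintype.card F with hqdef
    have hq : 0 < q := Fintype.card_pos
    have hCne : ∃ c ∈ C, c ≠ (0 : ι → F) := by
      rw [← Submodule.ne_bot_iff]
      intro hbot
      rw [hbot, finrank_bot] at hrank
      omega
    have hWne : {w | ∃ c ∈ C, c ≠ (0 : ι → F) ∧ wtF c = w}.Nonempty := by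
      obtain ⟨c, hc, hc0⟩ := hCne
      exact ⟨wtF c, c, hc, hc0, rfl⟩
    set d0 := sInf {w | ∃ c ∈ C, c ≠ (0 : ι → F) ∧ wtF c = w} with hd0def
    obtain ⟨c, hcC, hc0, hwc⟩ := Nat.sInf_mem hWne
    rw [← hd0def] at hwc
    have hmin0 : ∀ y ∈ C, y ≠ 0 → d0 ≤ wtF y := fun y hy hy0 => Nat.sInf_le ⟨y, hy, hy0, rfl⟩
    have hd0pos : 0 < d0 := hwc ▸ wtF_pos hc0
    have hdd0 : d ≤ d0 := hwc ▸ hmin c hcC hc0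
    set π : (ι → F) →ₗ[F] ({j : ι // c j = 0} → F) := LinearMap.funLeft F F Subtype.val
      with hπdef
    have hπc : π c = 0 := funext fun j => j.2
    have hι'card : Fintype.card {j : ι // c j = 0} = Fintype.card ι - d0 := by
      rw [Fintype.card_subtype]
      have h1 := Finset.card_filter_add_card_filter_not
        (s := (Finset.univ : Finset ι)) (p := fun j => c j = 0)
      have hwtc : (Finset.univ.filter fun j => ¬ c j = 0).card = d0 := by
        rw [← hwc]; unfold wtF; congr 1
      rw [Finset.card_univ] at h1
      omega
    have hres : ∀ x ∈ C, (∀ α : F, x ≠ α • c) → cd d0 q ≤ wtF (π x) := by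
      intro x hx hxc
      exact residual_wt C c x hcC hx d0 hwc hmin0 hxc
    have hK : K ≤ Module.finrank F (C.map π) := by
      have h1 := LinearMap.finrank_range_add_finrank_ker (π.domRestrict C)
      rw [LinearMap.range_domRestrict] at h1
      have h3 : Module.finrank F (LinearMap.ker (π.domRestrict C)) ≤ 1 := by
        have hker : ∀ z : LinearMap.ker (π.domRestrict C),
            (z : ι → F) ∈ Submodule.span F {c} := by
          rintro ⟨⟨x, hxC⟩, hz⟩
          by_contra hns
          have hxc : ∀ α : F, x ≠ α • c := by
            intro α h
            exact hns (Submodule.mem_span_singleton.2 ⟨α, h.symm⟩)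
          have h4 := hres x hxC hxc
          have hz0 : π x = 0 := hz
          rw [hz0] at h4
          have h5 : wtF (0 : {j : ι // c j = 0} → F) = 0 := by
            unfold wtF; simp
          rw [h5] at h4
          have := cd_pos hq hd0pos
          omega
        let g : LinearMap.ker (π.domRestrict C) →ₗ[F] Submodule.span F {c} :=
          { toFun := fun z => ⟨(z : ι → F), hker z⟩
            map_add' := fun a b => rfl
            map_smul' := fun r a => rfl }
        have hg : Function.Injective g := by
          intro a b h
          rw [Subtype.ext_iff] at h
          exact Subtype.ext (Subtype.ext h)
        calc Module.finrank F (LinearMap.ker (π.domRestrict C))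
            ≤ Module.finrank F (Submodule.span F {c}) :=
              LinearMap.finrank_le_finrank_of_injective hg
          _ = 1 := finrank_span_singleton hc0
      omega
    have hmin' : ∀ y ∈ C.map π, y ≠ 0 → cd d0 q ≤ wtF y := by
      rintro y ⟨x, hxC, rfl⟩ hy0
      apply hres x hxC
      intro α h
      apply hy0
      rw [h, _root_.map_smul, hπc, smul_zero]
    have hIH := ih {j : ι // c j = 0} (C.map π) (cd d0 q) hK hmin'
    have hsum1 : ∑ l ∈ Finset.range (K+1), cd d (q ^ l)
        ≤ ∑ l ∈ Finset.range (K+1), cd d0 (q ^ l) :=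
      Finset.sum_le_sum fun l _ => cd_mono (pow_pos hq l) hdd0
    have hsum2 : ∑ l ∈ Finset.range (K+1), cd d0 (q ^ l)
        = (∑ l ∈ Finset.range K, cd d0 (q ^ (l+1))) + d0 := by
      rw [Finset.sum_range_succ']
      simp [cd_one]
    have hsum3 : ∑ l ∈ Finset.range K, cd (cd d0 q) (q ^ l)
        = ∑ l ∈ Finset.range K, cd d0 (q ^ (l+1)) := by
      apply Finset.sum_congr rfl
      intro l _
      rw [cd_cd hq (pow_pos hq l), pow_succ']
    have hd0card : d0 ≤ Fintype.card ι := hwc ▸ wtF_le_card c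
    rw [hsum3] at hIH
    rw [hι'card] at hIH
    omega

/-! ### Truncation of a convolutional code to a block code -/

private noncomputable def Umap (F : Type*) [Field F] {k : ℕ} (s : Fin k → ℕ) :
    (Π r, (Fin (s r) → F)) →ₗ[F] (Fin k → Polynomial F) :=
  LinearMap.pi fun r =>
    (∑ t : Fin (s r), LinearMap.toSpanSingleton F (Polynomial F) (Polynomial.X ^ (t : ℕ)) ∘ₗ
      LinearMap.proj t) ∘ₗ LinearMap.proj r

private lemma Umap_apply {F : Type*} [Field F] {k : ℕ} (s : Fin k → ℕ)
    (a : Π r, (Fin (s r) → F)) (r : Fin k) :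
    Umap F s a r = ∑ t : Fin (s r), Polynomial.C (a r t) * Polynomial.X ^ (t : ℕ) := by
  simp [Umap, LinearMap.pi_apply, LinearMap.sum_apply, LinearMap.toSpanSingleton_apply,
    Polynomial.smul_eq_C_mul]

private lemma Umap_coeff_lt {F : Type*} [Field F] {k : ℕ} (s : Fin k → ℕ)
    (a : Π r, (Fin (s r) → F)) (r : Fin k) (t : Fin (s r)) :
    (Umap F s a r).coeff (t : ℕ) = a r t := by
  rw [Umap_apply]
  rw [Polynomial.finset_sum_coeff]
  rw [Finset.sum_eq_single t]
  · simp
  · intro b _ hb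
    simp only [Polynomial.coeff_C_mul, Polynomial.coeff_X_pow]
    rw [if_neg (by simpa [Fin.val_eq_val] using hb ∘ Fin.ext ∘ Eq.symm), mul_zero]
  · simp

private lemma Umap_coeff_ge {F : Type*} [Field F] {k : ℕ} (s : Fin k → ℕ)
    (a : Π r, (Fin (s r) → F)) (r : Fin k) {t : ℕ} (ht : s r ≤ t) :
    (Umap F s a r).coeff t = 0 := by
  rw [Umap_apply, Polynomial.finset_sum_coeff]
  apply Finset.sum_eq_zero
  intro b _
  simp only [Polynomial.coeff_C_mul, Polynomial.coeff_X_pow]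
  have hb := b.isLt
  rw [if_neg (by omega), mul_zero]

private lemma Umap_eq_zero {F : Type*} [Field F] {k : ℕ} {s : Fin k → ℕ}
    {a : Π r, (Fin (s r) → F)} (h : Umap F s a = 0) : a = 0 := by
  funext r t
  have := Umap_coeff_lt s a r t
  rw [h] at this
  simpa using this.symm

private noncomputable def Psimap {F : Type*} [Field F] {k n : ℕ}
    (G : Matrix (Fin k) (Fin n) (Polynomial F)) (s : Fin k → ℕ) (M' : ℕ) :
    (Π r, (Fin (s r) → F)) →ₗ[F] ((Fin n × Fin M') → F) :=
  LinearMap.pi fun jt => (Polynomial.lcoeff F (jt.2 : ℕ)) ∘ₗ (LinearMap.proj jt.1) ∘ₗ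
    ((Matrix.vecMulLinear G).restrictScalars F) ∘ₗ Umap F s

private lemma Psimap_apply {F : Type*} [Field F] {k n : ℕ}
    (G : Matrix (Fin k) (Fin n) (Polynomial F)) (s : Fin k → ℕ) (M' : ℕ)
    (a : Π r, (Fin (s r) → F)) (jt : Fin n × Fin M') :
    Psimap G s M' a jt = (((Umap F s a) ᵥ* G) jt.1).coeff (jt.2 : ℕ) := rfl

open Classical in
private lemma card_coeff_filter {F : Type*} [Field F] (M' : ℕ) (p : Polynomial F)
    (hp : ∀ t, M' ≤ t → p.coeff t = 0) :
    (Finset.univ.filter fun t : Fin M' => p.coeff (t : ℕ) ≠ 0).card = p.support.card := by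
  refine Finset.card_bij (fun t _ => (t : ℕ)) ?_ ?_ ?_
  · intro t ht
    exact Polynomial.mem_support_iff.2 (Finset.mem_filter.1 ht).2
  · intro t _ t' _ h
    exact Fin.ext h
  · intro t ht
    have h0 : p.coeff t ≠ 0 := Polynomial.mem_support_iff.1 ht
    have hlt : t < M' := by
      by_contra h
      exact h0 (hp t (by omega))
    exact ⟨⟨t, hlt⟩, Finset.mem_filter.2 ⟨Finset.mem_univ _, h0⟩, rfl⟩

open Classical in
private lemma wtF_prod {F : Type*} [Zero F] {n M' : ℕ} (x : Fin n × Fin M' → F) :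
    wtF x = ∑ j : Fin n, (Finset.univ.filter fun t : Fin M' => x (j, t) ≠ 0).card := by
  unfold wtF
  rw [Finset.card_filter, Fintype.sum_prod_type]
  congr 1
  ext j
  rw [Finset.card_filter]

/-- **Griesmer bound for convolutional codes.** -/
theorem convolutional_griesmer_bound
    {F : Type*} [Field F] [Fintype F] {q k n : ℕ} (hq : Fintype.card F = q)
    (hk : 1 ≤ k) (hkn : k < n)
    (G : Matrix (Fin k) (Fin n) (Polynomial F))
    (hright : ∃ H : Matrix (Fin n) (Fin k) (Polynomial F), G * H = 1)
    (ν : Fin k → ℕ) (hν : ∀ r, ν r = rowDeg G r)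
    (δ m : ℕ) (hδ : δ = ∑ r, ν r)
    (hminimal : complexity G = δ)
    (hm : m = Finset.univ.sup ν)
    (d : ℕ)
    (hd : IsLeast {w : ℕ | ∃ u : Fin k → Polynomial F,
      u ≠ 0 ∧ w = polyWt (Matrix.vecMul u G)} d)
    (i : ℕ) (hi : k * m = δ → 1 ≤ i) :
    ∑ l ∈ Finset.range (k * (m + i) - δ), ⌈(d : ℚ) / (q : ℚ) ^ l⌉ ≤ (n * (m + i) : ℕ) := by
  classical
  subst hq
  obtain ⟨H, hH⟩ := hright
  set M' : ℕ := m + i with hM'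
  set s : Fin k → ℕ := fun r => M' - ν r with hs
  have hνm : ∀ r, ν r ≤ m := by
    intro r; rw [hm]; exact Finset.le_sup (f := ν) (Finset.mem_univ r)
  have hGdeg : ∀ r j, (G r j).natDegree ≤ ν r := by
    intro r j
    rw [hν r, rowDeg]
    exact Finset.le_sup (f := fun j => (G r j).natDegree) (Finset.mem_univ j)
  -- all high coefficients of truncated codewords vanish
  have hcw : ∀ (a : Π r, (Fin (s r) → F)) (j : Fin n) (t : ℕ), M' ≤ t →
      (((Umap F s a) ᵥ* G) j).coeff t = 0 := by
    intro a j t ht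
    have : ((Umap F s a) ᵥ* G) j = ∑ r, Umap F s a r * G r j := by
      simp [Matrix.vecMul, dotProduct]
    rw [this, Polynomial.finset_sum_coeff]
    apply Finset.sum_eq_zero
    intro r _
    by_cases h0 : Umap F s a r = 0
    · simp [h0]
    · have hdeg : (Umap F s a r).natDegree < s r := by
        by_contra hge
        push_neg at hge
        have hlc := Polynomial.leadingCoeff_ne_zero.mpr h0
        rw [Polynomial.leadingCoeff] at hlc
        exact hlc (Umap_coeff_ge s a r hge)
      apply Polynomial.coeff_eq_zero_of_natDegree_lt
      have h1 := Polynomial.natDegree_mul_le (p := Umap F s a r) (q := G r j)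
      have h2 := hGdeg r j
      have h3 := hνm r
      have hsr : s r = M' - ν r := rfl
      omega
  -- injectivity of the truncation map
  have hU0' : ∀ a, Psimap G s M' a = 0 → a = 0 := by
    intro a ha
    have huG : (Umap F s a) ᵥ* G = 0 := by
      funext j
      apply Polynomial.ext
      intro t
      by_cases ht : t < M'
      · have := congrFun ha (j, ⟨t, ht⟩)
        simpa [Psimap_apply] using this
      · simpa using hcw a j t (by omega)
    have h2 : (Umap F s a) ᵥ* (G * H) = Umap F s a := by rw [hH, Matrix.vecMul_one]
    rw [← Matrix.vecMul_vecMul, huG, Matrix.zero_vecMul] at h2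
    exact Umap_eq_zero h2.symm
  have hinj : Function.Injective (Psimap G s M') :=
    LinearMap.ker_eq_bot.mp (LinearMap.ker_eq_bot'.mpr hU0')
  -- weight of truncated codewords
  have hwt : ∀ a, wtF (Psimap G s M' a) = polyWt ((Umap F s a) ᵥ* G) := by
    intro a
    rw [wtF_prod]
    unfold polyWt
    apply Finset.sum_congr rfl
    intro j _
    exact card_coeff_filter M' _ (fun t ht => hcw a j t ht)
  -- dimension count
  have hrankM : Module.finrank F (Π r, Fin (s r) → F) = k * M' - δ := by
    rw [Module.finrank_pi_fintype]
    have h1 : ∀ r : Fin k, Module.finrank F (Fin (s r) → F) = s r := by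
      intro r; rw [Module.finrank_pi, Fintype.card_fin]
    rw [Finset.sum_congr rfl (fun r _ => h1 r)]
    have h2 : (Finset.univ.sum s) + δ = k * M' := by
      rw [hδ, ← Finset.sum_add_distrib]
      calc ∑ r, (s r + ν r) = ∑ _r : Fin k, M' :=
            Finset.sum_congr rfl (fun r _ => by
              have h5 := hνm r
              simp only [hs]
              omega)
        _ = k * M' := by
            rw [Finset.sum_const, Finset.card_univ, Fintype.card_fin, smul_eq_mul]
    omega
  set C : Submodule F (Fin n × Fin M' → F) := LinearMap.range (Psimap G s M') with hC
  have hrankC : k * M' - δ ≤ Module.finrank F C := by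
    rw [hC, LinearMap.finrank_range_of_inj hinj, hrankM]
  have hminC : ∀ x ∈ C, x ≠ 0 → d ≤ wtF x := by
    rintro x ⟨a, rfl⟩ hx0
    have ha0 : a ≠ 0 := by
      rintro rfl
      exact hx0 (map_zero _)
    have hu0 : Umap F s a ≠ 0 := fun h => ha0 (Umap_eq_zero h)
    rw [hwt a]
    exact hd.2 ⟨Umap F s a, hu0, rfl⟩
  have hblock := blockGriesmer (k * M' - δ) (Fin n × Fin M') C d hrankC hminC
  rw [Fintype.card_prod, Fintype.card_fin, Fintype.card_fin] at hblock
  have hq0 : 0 < Fintype.card F := Fintype.card_pos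
  have hceil : ∀ l : ℕ, ⌈(d : ℚ) / (Fintype.card F : ℚ) ^ l⌉ = (cd d (Fintype.card F ^ l) : ℤ) := by
    intro l
    rw [← ceil_eq_cd (pow_pos hq0 l) d]
    push_cast
    rfl
  calc ∑ l ∈ Finset.range (k * M' - δ), ⌈(d : ℚ) / (Fintype.card F : ℚ) ^ l⌉
      = ((∑ l ∈ Finset.range (k * M' - δ), cd d (Fintype.card F ^ l) : ℕ) : ℤ) := by
        rw [Finset.sum_congr rfl (fun l _ => hceil l)]
        push_cast
        rfl
    _ ≤ ((n * M' : ℕ) : ℤ) := by exact_mod_cast hblock
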